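/- Let X ⊆ Σ^G be a nonempty subshift that is uniformly avo with avoradius r for a family C of subsets of G \ {e}. If D ⊆ G admits a C-well-ordering, then X|D is SFT with window size r: forbidding exactly the patterns with domain in the r-ball that do not appear in X defines X|D. -/

import Mathlib

open scoped Pointwise

/-- `B` is a determining set for `C`. -/
def IsDetermining {G A : Type*} [Group G] (X : Set (G → A)) (C B : Set G) : Prop :=
  ∀ x : G → A, (∃ w ∈ X, ∀ g ∈ C, w g = x g) →
    ∀ a : A, (∃ w ∈ X, (∀ g ∈ B, w g = x g) ∧ w 1 = a) ↔
      (∃ w ∈ X, (∀ g ∈ C, w g = x g) ∧ w 1 = a)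

/-- Let `X ⊆ A^G` be a nonempty subshift that is uniformly avo with avoradius `r` for a
family `𝒞` of subsets of `G \ {e}` (`S ^ r` being the `r`-ball of the word metric). If
`D ⊆ G` admits a `𝒞`-well-ordering (a well-ordering of `D` all of whose translated
strict downsets lie in `𝒞`), then `X|D` is SFT with window size `r`: a configuration on
`D` is globally valid if and only if each of its subpatterns with domain a translate of
a subset of the `r`-ball fitting inside `D` appears in `X`. -/
theorem uniformly_avo_wellordered_SFT {G A : Type*} [Group G] [Finite A]
    [TopologicalSpace A] [DiscreteTopology A]
    (S : Set G) (hS1 : (1 : G) ∈ S) (hSinv : S⁻¹ = S) (hSfin : S.Finite)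
    (hSgen : ∀ g : G, ∃ n : ℕ, g ∈ S ^ n)
    (X : Set (G → A)) (hclosed : IsClosed X)
    (hshift : ∀ g : G, ∀ x ∈ X, (fun h => x (g⁻¹ * h)) ∈ X)
    (hne : X.Nonempty)
    (𝒞 : Set (Set G)) (h𝒞e : ∀ C ∈ 𝒞, (1 : G) ∉ C)
    (r : ℕ) (havo : ∀ C ∈ 𝒞, IsDetermining X C (C ∩ S ^ r))
    (D : Set G)
    (hwo : ∃ lt : D → D → Prop, IsWellOrder D lt ∧
      ∀ s : D, (fun t => (s : G)⁻¹ * t) '' {t : G | ∃ h : t ∈ D, lt ⟨t, h⟩ s} ∈ 𝒞) :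
    ∀ x : G → A, (∃ w ∈ X, ∀ g ∈ D, w g = x g) ↔
      ∀ (g : G) (E : Set G), E ⊆ S ^ r → (∀ h ∈ E, g * h ∈ D) →
        ∃ w ∈ X, ∀ h ∈ E, w h = x (g * h) := by
  classical
  intro x
  constructor
  · rintro ⟨w, hw, hwx⟩ g E hE hgE
    refine ⟨fun h => w (g * h), ?_, fun h hh => hwx _ (hgE h hh)⟩
    have := hshift g⁻¹ w hw
    simpa using this
  · intro hloc
    obtain ⟨lt, hWO, hdown⟩ := hwo
    haveI := hWO
    haveI : CompactSpace A := Finite.compactSpace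
    have hone : (1 : G) ∈ S ^ r := Set.one_mem_pow hS1
    set K : D → Set (G → A) := fun s =>
      X ∩ ⋂ t : D, ⋂ _ : lt t s ∨ t = s, {w : G → A | w ↑t = x ↑t} with hKdef
    have hKmem : ∀ (s : D) (w : G → A),
        w ∈ K s ↔ w ∈ X ∧ ∀ t : D, lt t s ∨ t = s → w ↑t = x ↑t := by
      intro s w
      simp [hKdef, Set.mem_iInter]
    have hKclosed : ∀ s, IsClosed (K s) := fun s =>
      hclosed.inter (isClosed_iInter fun t => isClosed_iInter fun _ =>
        isClosed_eq (continuous_apply _) continuous_const)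
    have htrans : ∀ {a b c : D}, lt a b → lt b c → lt a c :=
      fun h1 h2 => IsTrans.trans _ _ _ h1 h2
    have htri : ∀ a b : D, lt a b ∨ a = b ∨ lt b a :=
      fun a b => trichotomous_of lt a b
    have hmono : ∀ {s₁ s₂ : D}, lt s₁ s₂ ∨ s₁ = s₂ → K s₂ ⊆ K s₁ := by
      intro s₁ s₂ h12 w hw
      rw [hKmem] at hw ⊢
      refine ⟨hw.1, fun t ht => hw.2 t ?_⟩
      rcases h12 with h12 | rfl
      · rcases ht with ht | rfl
        · exact Or.inl (htrans ht h12)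
        · exact Or.inl h12
      · exact ht
    -- the key step: one element at a time, via the determining property
    have hstep : ∀ s : D, (∃ w ∈ X, ∀ t : D, lt t s → w ↑t = x ↑t) → (K s).Nonempty := by
      intro s hY
      obtain ⟨w, hwX, hwagree⟩ := hY
      set C : Set G := (fun t => (s : G)⁻¹ * t) '' {t : G | ∃ h : t ∈ D, lt ⟨t, h⟩ s} with hCdef
      have hC : C ∈ 𝒞 := hdown s
      set y : G → A := fun h => x ((s : G) * h) with hydef
      have hCelt : ∀ g ∈ C, ∃ ht : ((s : G) * g) ∈ D, lt ⟨(s : G) * g, ht⟩ s := by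
        rintro g ⟨t, ⟨htD, hlt⟩, hg⟩
        have hst : (s : G) * g = t := by rw [← hg]; group
        exact hst ▸ ⟨htD, hlt⟩
      have hhyp : ∃ w' ∈ X, ∀ g ∈ C, w' g = y g := by
        refine ⟨fun h => w ((s : G) * h), by simpa using hshift (s : G)⁻¹ w hwX, ?_⟩
        intro g hg
        obtain ⟨htD, hlt⟩ := hCelt g hg
        exact hwagree ⟨(s : G) * g, htD⟩ hlt
      have hdet := havo C hC y hhyp (y 1)
      have hLHS : ∃ w' ∈ X, (∀ g ∈ C ∩ S ^ r, w' g = y g) ∧ w' 1 = y 1 := by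
        obtain ⟨w'', hw''X, hw''⟩ :=
          hloc (s : G) (insert 1 (C ∩ S ^ r))
            (by
              intro h hh
              rcases hh with rfl | hh
              · exact hone
              · exact hh.2)
            (by
              intro h hh
              rcases hh with rfl | hh
              · simpa using s.2
              · obtain ⟨htD, _⟩ := hCelt h hh.1
                exact htD)
        refine ⟨w'', hw''X, fun g hg => ?_, ?_⟩
        · exact hw'' g (Set.mem_insert_of_mem _ hg)
        · exact hw'' 1 (Set.mem_insert _ _)
      obtain ⟨w', hw'X, hw'C, hw'1⟩ := hdet.mp hLHS
      refine ⟨fun h => w' ((s : G)⁻¹ * h), ?_⟩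
      rw [hKmem]
      refine ⟨hshift (s : G) w' hw'X, fun t ht => ?_⟩
      rcases ht with ht | rfl
      · have hmem : (s : G)⁻¹ * ↑t ∈ C := ⟨↑t, ⟨t.2, ht⟩, rfl⟩
        have := hw'C _ hmem
        rw [this, hydef]
        simp
      · show w' ((t : G)⁻¹ * ↑t) = x ↑t
        rw [inv_mul_cancel, hw'1, hydef]
        simp
    have hwf : WellFounded lt := IsWellFounded.wf
    have hK : ∀ s : D, (K s).Nonempty := by
      intro s
      refine hwf.induction (C := fun s => (K s).Nonempty) s fun s IH => ?_
      refine hstep s ?_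
      by_cases hex : Nonempty {t : D // lt t s}
      · obtain ⟨w, hw⟩ :=
          IsCompact.nonempty_iInter_of_directed_nonempty_isCompact_isClosed
            (fun t : {t : D // lt t s} => K t.1)
            (by
              intro t₁ t₂
              rcases htri t₁.1 t₂.1 with h | h | h
              · exact ⟨t₂, hmono (Or.inl h), subset_rfl⟩
              · exact ⟨t₂, hmono (Or.inr h), subset_rfl⟩
              · exact ⟨t₁, subset_rfl, hmono (Or.inl h)⟩)
            (fun t => IH t.1 t.2)
            (fun t => (hKclosed t.1).isCompact)
            (fun t => hKclosed t.1)
        simp only [Set.mem_iInter] at hw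
        refine ⟨w, ((hKmem _ w).1 (hw hex.some)).1, fun t ht => ?_⟩
        exact ((hKmem _ w).1 (hw ⟨t, ht⟩)).2 t (Or.inr rfl)
      · exact ⟨hne.choose, hne.choose_spec, fun t ht => absurd ⟨⟨t, ht⟩⟩ hex⟩
    by_cases hD : Nonempty D
    · obtain ⟨w, hw⟩ :=
        IsCompact.nonempty_iInter_of_directed_nonempty_isCompact_isClosed K
          (by
            intro s₁ s₂
            rcases htri s₁ s₂ with h | h | h
            · exact ⟨s₂, hmono (Or.inl h), subset_rfl⟩
            · exact ⟨s₂, hmono (Or.inr h), subset_rfl⟩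
            · exact ⟨s₁, subset_rfl, hmono (Or.inl h)⟩)
          hK (fun s => (hKclosed s).isCompact) hKclosed
      simp only [Set.mem_iInter] at hw
      refine ⟨w, ((hKmem hD.some w).1 (hw hD.some)).1, fun g hg => ?_⟩
      exact ((hKmem ⟨g, hg⟩ w).1 (hw ⟨g, hg⟩)).2 ⟨g, hg⟩ (Or.inr rfl)
    · exact ⟨hne.choose, hne.choose_spec, fun g hg => absurd ⟨⟨g, hg⟩⟩ hD⟩
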